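/- Let f ∈ O_{ℂ²,0} be a reduced analytic germ with f(0)=0 and let (S,0) ⊂ (ℂ³,0) be its stabilization {f(x,y) − z² = 0}. For each i ≥ 0, the ℂ-vector space {H = h₁ + z·h₂ : h₁,h₂ ∈ O_{ℂ²,0}, v(H) ≥ i} decomposes as the direct sum {h₁ ∈ O_{ℂ²,0} : v(h₁) ≥ i} ⊕ z·{h₂ ∈ O_{ℂ²,0} : v(z·h₂) ≥ i}, where v denotes the minimal order along arcs on (S,0). Consequently the Poincaré series of the arc filtration on these germs is the sum of the Poincaré series of the induced filtrations on O_{ℂ²,0} and on z·O_{ℂ²,0}. -/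

import Mathlib

open Filter
open scoped Classical

/-- An arc on the hypersurface `{f = 0} ⊆ ℂ^N`: a germ of an analytic map
`φ : (ℂ,0) → (ℂ^N,0)` with `f ∘ φ ≡ 0` near `0`. -/
structure Arc (N : ℕ) (f : (Fin N → ℂ) → ℂ) where
  toFun : ℂ → Fin N → ℂ
  analyticAt : AnalyticAt ℂ toFun 0
  map_zero : toFun 0 = 0
  vanish : ∀ᶠ τ in nhds 0, f (toFun τ) = 0

/-- The order of vanishing at `0` of a germ `ℂ → ℂ`: the exponent of the first
nonvanishing Taylor term, `⊤` for the zero germ (junk value `0` if not analytic). -/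
noncomputable def ord (h : ℂ → ℂ) : ℕ∞ :=
  if hh : AnalyticAt ℂ h 0 then analyticOrderAt h 0 else 0

/-- `v(g)`: the minimal order of vanishing of `g` along arcs on `{f = 0} ⊆ ℂ^N`. -/
noncomputable def vArc (N : ℕ) (f g : (Fin N → ℂ) → ℂ) : ℕ∞ :=
  ⨅ ψ : Arc N f, ord (g ∘ ψ.toFun)

/-- The `i`-th piece `F_i` of the arc filtration: analytic germs `g` with `v(g) ≥ i`. -/
def arcFiltration (N : ℕ) (f : (Fin N → ℂ) → ℂ) (i : ℕ) :
    Set ((Fin N → ℂ) → ℂ) :=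
  {g | AnalyticAt ℂ g 0 ∧ (i : ℕ∞) ≤ vArc N f g}

/-- `dimQuotEq F i d` says that `dim_ℂ (F i / F (i+1)) = d`: there are `d` elements of
`F i` such that every element of `F i` has a unique expression as a linear combination
of them modulo `F (i+1)`. -/
def dimQuotEq {M : Type*} [AddCommGroup M] [Module ℂ M]
    (F : ℕ → Set M) (i d : ℕ) : Prop :=
  ∃ b : Fin d → M, (∀ k, b k ∈ F i) ∧
    ∀ g ∈ F i, ∃! c : Fin d → ℂ, g - ∑ k, c k • b k ∈ F (i + 1)

/-- The stabilization `{f(x,y) - z² = 0} ⊆ ℂ³` of the plane curve `{f = 0}`. -/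
def stab (f : (Fin 2 → ℂ) → ℂ) : (Fin 3 → ℂ) → ℂ :=
  fun w => f ![w 0, w 1] - w 2 ^ 2

/-- A reduced (squarefree) analytic germ at `0`: no square of a nonunit divides it. -/
def SquarefreeGerm {N : ℕ} (f : (Fin N → ℂ) → ℂ) : Prop :=
  ∀ u : (Fin N → ℂ) → ℂ, AnalyticAt ℂ u 0 → u 0 = 0 →
    ¬ ∃ w : (Fin N → ℂ) → ℂ, AnalyticAt ℂ w 0 ∧
      ∀ᶠ x in nhds 0, f x = u x * u x * w x

/-- Germs of the form `h₁ + z·h₂` (i.e. `O_{S,0} = O_{ℂ²,0} ⊕ z·O_{ℂ²,0}`) with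
`v ≥ i` on the stabilization `S = {f(x,y) - z² = 0}`. -/
def FS (f : (Fin 2 → ℂ) → ℂ) (i : ℕ) : Set ((Fin 3 → ℂ) → ℂ) :=
  {H | (∃ h₁ h₂ : (Fin 2 → ℂ) → ℂ, AnalyticAt ℂ h₁ 0 ∧ AnalyticAt ℂ h₂ 0 ∧
          H = fun w => h₁ ![w 0, w 1] + w 2 * h₂ ![w 0, w 1]) ∧
        (i : ℕ∞) ≤ vArc 3 (stab f) H}

/-- Germs of the form `h₁` (the summand `O_{ℂ²,0}`) with `v ≥ i`. -/
def FA (f : (Fin 2 → ℂ) → ℂ) (i : ℕ) : Set ((Fin 3 → ℂ) → ℂ) :=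
  {H | (∃ h₁ : (Fin 2 → ℂ) → ℂ, AnalyticAt ℂ h₁ 0 ∧
          H = fun w => h₁ ![w 0, w 1]) ∧
        (i : ℕ∞) ≤ vArc 3 (stab f) H}

/-- Germs of the form `z·h₂` (the summand `z·O_{ℂ²,0}`) with `v ≥ i`. -/
def FB (f : (Fin 2 → ℂ) → ℂ) (i : ℕ) : Set ((Fin 3 → ℂ) → ℂ) :=
  {H | (∃ h₂ : (Fin 2 → ℂ) → ℂ, AnalyticAt ℂ h₂ 0 ∧
          H = fun w => w 2 * h₂ ![w 0, w 1]) ∧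
        (i : ℕ∞) ≤ vArc 3 (stab f) H}

private lemma ord_le_iff {g : ℂ → ℂ} (hg : AnalyticAt ℂ g 0) (i : ℕ) :
    (i : ℕ∞) ≤ ord g ↔
      ∃ k : ℂ → ℂ, AnalyticAt ℂ k 0 ∧ ∀ᶠ τ in nhds 0, g τ = τ ^ i * k τ := by
  have hord : ord g = analyticOrderAt g 0 := dif_pos hg
  rw [hord]
  constructor
  · intro hi
    cases h : analyticOrderAt g 0 with
    | top =>
      refine ⟨0, analyticAt_const, ?_⟩
      filter_upwards [analyticOrderAt_eq_top.mp h] with τ hτ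
      simp [hτ]
    | coe n =>
      rw [h] at hi
      have hin : i ≤ n := by exact_mod_cast hi
      obtain ⟨u, hu, hu0, hequ⟩ := (hg.analyticOrderAt_eq_natCast (n := n)).mp h
      refine ⟨fun τ => τ ^ (n - i) * u τ, (analyticAt_id.pow _).mul hu, ?_⟩
      filter_upwards [hequ] with τ hτ
      rw [hτ]
      simp only [smul_eq_mul, sub_zero, ← mul_assoc, ← pow_add, Nat.add_sub_cancel' hin]
  · rintro ⟨k, hk, hgk⟩
    cases h : analyticOrderAt g 0 with
    | top => exact le_top
    | coe n =>
      by_contra hlt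
      push_neg at hlt
      have hni : n < i := by exact_mod_cast hlt
      obtain ⟨u, hu, hu0, hequ⟩ := (hg.analyticOrderAt_eq_natCast (n := n)).mp h
      have hev : ∀ᶠ τ in nhdsWithin (0:ℂ) {(0:ℂ)}ᶜ, u τ = τ ^ (i - n) * k τ := by
        filter_upwards [nhdsWithin_le_nhds (hgk.and hequ), self_mem_nhdsWithin]
          with τ hτ hτ0
        obtain ⟨h1, h2⟩ := hτ
        have hτne : (τ : ℂ) ≠ 0 := hτ0
        have key : τ ^ n * u τ = τ ^ n * (τ ^ (i - n) * k τ) := by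
          rw [smul_eq_mul, sub_zero] at h2
          rw [← h2, h1, ← mul_assoc, ← pow_add, Nat.add_sub_cancel' hni.le]
        exact mul_left_cancel₀ (pow_ne_zero n hτne) key
      have t1 : Tendsto u (nhdsWithin (0:ℂ) {(0:ℂ)}ᶜ) (nhds (u 0)) :=
        (hu.continuousAt.tendsto).mono_left nhdsWithin_le_nhds
      have t2 : Tendsto (fun τ : ℂ => τ ^ (i - n) * k τ)
          (nhdsWithin (0:ℂ) {(0:ℂ)}ᶜ) (nhds 0) := by
        have : ContinuousAt (fun τ : ℂ => τ ^ (i - n) * k τ) 0 :=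
          ((continuous_pow _).continuousAt).mul hk.continuousAt
        have h0 : (0:ℂ) ^ (i - n) * k 0 = 0 := by
          rw [zero_pow (by omega : i - n ≠ 0), zero_mul]
        have t2' := Tendsto.mono_left this.tendsto
          (nhdsWithin_le_nhds : nhdsWithin (0:ℂ) {(0:ℂ)}ᶜ ≤ nhds 0)
        rwa [h0] at t2'
      exact hu0 (tendsto_nhds_unique (t1.congr' hev) t2)

private lemma arc_eval_analytic {N : ℕ} {f : (Fin N → ℂ) → ℂ} (ψ : Arc N f) (j : Fin N) :
    AnalyticAt ℂ (fun τ => ψ.toFun τ j) 0 :=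
  ((ContinuousLinearMap.proj (R := ℂ) (φ := fun _ : Fin N => ℂ) j).analyticAt
    (ψ.toFun 0)).comp ψ.analyticAt

private def Arc.flip {f : (Fin 2 → ℂ) → ℂ} (ψ : Arc 3 (stab f)) : Arc 3 (stab f) where
  toFun τ := ![ψ.toFun τ 0, ψ.toFun τ 1, -ψ.toFun τ 2]
  analyticAt := by
    have h : (fun τ => (![ψ.toFun τ 0, ψ.toFun τ 1, -ψ.toFun τ 2] : Fin 3 → ℂ))
        = (fun τ j => (![fun t => ψ.toFun t 0, fun t => ψ.toFun t 1,
            fun t => -ψ.toFun t 2] : Fin 3 → ℂ → ℂ) j τ) := by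
      funext τ j; fin_cases j <;> rfl
    rw [h]
    apply AnalyticAt.pi
    intro j
    fin_cases j
    · simpa using arc_eval_analytic ψ 0
    · simpa using arc_eval_analytic ψ 1
    · exact (arc_eval_analytic ψ 2).neg
  map_zero := by funext j; fin_cases j <;> simp [ψ.map_zero]
  vanish := by
    filter_upwards [ψ.vanish] with τ hτ
    simp only [stab] at hτ ⊢
    simpa [neg_sq] using hτ

private lemma flip_apply {f : (Fin 2 → ℂ) → ℂ} (ψ : Arc 3 (stab f)) (τ : ℂ) :
    (ψ.flip).toFun τ 0 = ψ.toFun τ 0 ∧ (ψ.flip).toFun τ 1 = ψ.toFun τ 1 ∧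
      (ψ.flip).toFun τ 2 = -ψ.toFun τ 2 := by
  refine ⟨?_, ?_, ?_⟩ <;> simp [Arc.flip]

private lemma key_iff (f : (Fin 2 → ℂ) → ℂ) (i : ℕ) (h₁ h₂ : (Fin 2 → ℂ) → ℂ)
    (ha1 : AnalyticAt ℂ h₁ 0) (ha2 : AnalyticAt ℂ h₂ 0) :
    (i : ℕ∞) ≤ vArc 3 (stab f) (fun w => h₁ ![w 0, w 1] + w 2 * h₂ ![w 0, w 1]) ↔
      (i : ℕ∞) ≤ vArc 3 (stab f) (fun w => h₁ ![w 0, w 1]) ∧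
      (i : ℕ∞) ≤ vArc 3 (stab f) (fun w => w 2 * h₂ ![w 0, w 1]) := by
  have hφ : ∀ ψ : Arc 3 (stab f),
      AnalyticAt ℂ (fun τ => (![ψ.toFun τ 0, ψ.toFun τ 1] : Fin 2 → ℂ)) 0 := by
    intro ψ
    have h : (fun τ => (![ψ.toFun τ 0, ψ.toFun τ 1] : Fin 2 → ℂ))
        = (fun τ j => (![fun t => ψ.toFun t 0, fun t => ψ.toFun t 1] : Fin 2 → ℂ → ℂ) j τ) := by
      funext τ j; fin_cases j <;> rfl
    rw [h]
    apply AnalyticAt.pi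
    intro j
    fin_cases j
    · simpa using arc_eval_analytic ψ 0
    · simpa using arc_eval_analytic ψ 1
  have hφ0 : ∀ ψ : Arc 3 (stab f), (![ψ.toFun 0 0, ψ.toFun 0 1] : Fin 2 → ℂ) = 0 := by
    intro ψ; funext j; fin_cases j <;> simp [ψ.map_zero]
  have hA : ∀ ψ : Arc 3 (stab f),
      AnalyticAt ℂ (fun τ => h₁ ![ψ.toFun τ 0, ψ.toFun τ 1]) 0 := by
    intro ψ
    exact AnalyticAt.comp (by rw [hφ0 ψ] at *; exact ha1) (hφ ψ)
  have hB : ∀ ψ : Arc 3 (stab f),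
      AnalyticAt ℂ (fun τ => h₂ ![ψ.toFun τ 0, ψ.toFun τ 1]) 0 := by
    intro ψ
    exact AnalyticAt.comp (by rw [hφ0 ψ] at *; exact ha2) (hφ ψ)
  have hzB : ∀ ψ : Arc 3 (stab f),
      AnalyticAt ℂ (fun τ => ψ.toFun τ 2 * h₂ ![ψ.toFun τ 0, ψ.toFun τ 1]) 0 := by
    intro ψ; exact (arc_eval_analytic ψ 2).mul (hB ψ)
  have hH : ∀ ψ : Arc 3 (stab f),
      AnalyticAt ℂ (fun τ => h₁ ![ψ.toFun τ 0, ψ.toFun τ 1]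
        + ψ.toFun τ 2 * h₂ ![ψ.toFun τ 0, ψ.toFun τ 1]) 0 := by
    intro ψ; exact (hA ψ).add (hzB ψ)
  constructor
  · intro hv
    constructor
    · refine le_iInf fun ψ => ?_
      obtain ⟨k₁, hk₁, e₁⟩ := (ord_le_iff (hH ψ) i).mp (le_trans hv (iInf_le _ ψ))
      obtain ⟨k₂, hk₂, e₂⟩ := (ord_le_iff (hH ψ.flip) i).mp (le_trans hv (iInf_le _ ψ.flip))
      refine (ord_le_iff (hA ψ) i).mpr
        ⟨fun τ => (k₁ τ + k₂ τ) * 2⁻¹, (hk₁.add hk₂).mul analyticAt_const, ?_⟩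
      filter_upwards [e₁, e₂] with τ a1 a2
      obtain ⟨f0, f1, f2⟩ := flip_apply ψ τ
      rw [f0, f1, f2] at a2
      linear_combination (a1 + a2) / 2
    · refine le_iInf fun ψ => ?_
      obtain ⟨k₁, hk₁, e₁⟩ := (ord_le_iff (hH ψ) i).mp (le_trans hv (iInf_le _ ψ))
      obtain ⟨k₂, hk₂, e₂⟩ := (ord_le_iff (hH ψ.flip) i).mp (le_trans hv (iInf_le _ ψ.flip))
      refine (ord_le_iff (hzB ψ) i).mpr
        ⟨fun τ => (k₁ τ - k₂ τ) * 2⁻¹, (hk₁.sub hk₂).mul analyticAt_const, ?_⟩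
      filter_upwards [e₁, e₂] with τ a1 a2
      obtain ⟨f0, f1, f2⟩ := flip_apply ψ τ
      rw [f0, f1, f2] at a2
      linear_combination (a1 - a2) / 2
  · rintro ⟨hva, hvb⟩
    refine le_iInf fun ψ => ?_
    obtain ⟨k₁, hk₁, e₁⟩ := (ord_le_iff (hA ψ) i).mp (le_trans hva (iInf_le _ ψ))
    obtain ⟨k₂, hk₂, e₂⟩ := (ord_le_iff (hzB ψ) i).mp (le_trans hvb (iInf_le _ ψ))
    refine (ord_le_iff (hH ψ) i).mpr ⟨fun τ => k₁ τ + k₂ τ, hk₁.add hk₂, ?_⟩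
    filter_upwards [e₁, e₂] with τ a1 a2
    linear_combination a1 + a2

private lemma vec2_eta (v : Fin 2 → ℂ) : ![v 0, v 1] = v := by
  funext j; fin_cases j <;> simp

private lemma dec_inj {g₁ g₂ p q : (Fin 2 → ℂ) → ℂ}
    (h : (fun w : Fin 3 → ℂ => g₁ ![w 0, w 1])
        + (fun w : Fin 3 → ℂ => w 2 * g₂ ![w 0, w 1])
      = fun w : Fin 3 → ℂ => p ![w 0, w 1] + w 2 * q ![w 0, w 1]) :
    g₁ = p ∧ g₂ = q := by
  have h0 : ∀ v : Fin 2 → ℂ, g₁ v = p v := by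
    intro v
    have := congrFun h ![v 0, v 1, 0]
    simpa [vec2_eta v] using this
  refine ⟨funext h0, funext fun v => ?_⟩
  have h1 := congrFun h ![v 0, v 1, 1]
  simp only [Pi.add_apply, Matrix.cons_val_zero, Matrix.cons_val_one, Matrix.head_cons,
    Matrix.cons_val_two, Matrix.tail_cons, one_mul, vec2_eta v] at h1
  rw [h0 v] at h1
  exact add_left_cancel h1

private lemma FA_sub_FS (f : (Fin 2 → ℂ) → ℂ) (i : ℕ) {H : (Fin 3 → ℂ) → ℂ}
    (h : H ∈ FA f i) : H ∈ FS f i := by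
  obtain ⟨⟨h₁, hh, rfl⟩, hv⟩ := h
  exact ⟨⟨h₁, fun _ => 0, hh, analyticAt_const, by funext w; simp⟩, hv⟩

private lemma FB_sub_FS (f : (Fin 2 → ℂ) → ℂ) (i : ℕ) {H : (Fin 3 → ℂ) → ℂ}
    (h : H ∈ FB f i) : H ∈ FS f i := by
  obtain ⟨⟨h₂, hh, rfl⟩, hv⟩ := h
  exact ⟨⟨fun _ => 0, h₂, analyticAt_const, hh, by funext w; simp⟩, hv⟩

/-- For the stabilization `(S,0) = {f(x,y) - z² = 0}` of a reduced
plane curve germ, the `i`-th piece of the arc filtration on `O_{S,0} = O_{ℂ²,0} ⊕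
z·O_{ℂ²,0}` decomposes as the direct sum of the induced pieces on the two summands:
`H = h₁ + z·h₂` has `v(H) ≥ i` iff `v(h₁) ≥ i` and `v(z·h₂) ≥ i`. Consequently the
Poincaré series of the arc filtration is the sum of the Poincaré series of the induced
filtrations on `O_{ℂ²,0}` and on `z·O_{ℂ²,0}`. -/
theorem arcFiltration_stabilization_direct_sum
    (f : (Fin 2 → ℂ) → ℂ) (hf : AnalyticAt ℂ f 0) (hf0 : f 0 = 0)
    (hred : SquarefreeGerm f) :
    (∀ (i : ℕ) (h₁ h₂ : (Fin 2 → ℂ) → ℂ),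
      AnalyticAt ℂ h₁ 0 → AnalyticAt ℂ h₂ 0 →
      ((i : ℕ∞) ≤ vArc 3 (stab f) (fun w => h₁ ![w 0, w 1] + w 2 * h₂ ![w 0, w 1]) ↔
        (i : ℕ∞) ≤ vArc 3 (stab f) (fun w => h₁ ![w 0, w 1]) ∧
        (i : ℕ∞) ≤ vArc 3 (stab f) (fun w => w 2 * h₂ ![w 0, w 1]))) ∧
    ∀ (i a b : ℕ), dimQuotEq (FA f) i a → dimQuotEq (FB f) i b →
      dimQuotEq (FS f) i (a + b) := by
  refine ⟨fun i h₁ h₂ ha1 ha2 => key_iff f i h₁ h₂ ha1 ha2, ?_⟩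
  rintro i a b ⟨bA, hbA, huA⟩ ⟨bB, hbB, huB⟩
  choose gA hgAan hgAeq using fun k => (hbA k).1
  choose gB hgBan hgBeq using fun k => (hbB k).1
  have hsum : ∀ c : Fin (a + b) → ℂ,
      (∑ k, c k • Fin.append bA bB k)
        = (∑ j, c (Fin.castAdd b j) • bA j) + (∑ j, c (Fin.natAdd a j) • bB j) := by
    intro c
    rw [Fin.sum_univ_add]
    simp only [Fin.append_left, Fin.append_right]
  refine ⟨Fin.append bA bB, ?_, ?_⟩
  · intro k
    refine Fin.addCases (fun j => ?_) (fun j => ?_) k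
    · rw [Fin.append_left]; exact FA_sub_FS f i (hbA j)
    · rw [Fin.append_right]; exact FB_sub_FS f i (hbB j)
  · rintro g ⟨⟨h₁, h₂, ha1, ha2, hgeq⟩, hvg⟩
    have hkey := (key_iff f i h₁ h₂ ha1 ha2).mp (by rw [hgeq] at hvg; exact hvg)
    have memA : (fun w : Fin 3 → ℂ => h₁ ![w 0, w 1]) ∈ FA f i := ⟨⟨h₁, ha1, rfl⟩, hkey.1⟩
    have memB : (fun w : Fin 3 → ℂ => w 2 * h₂ ![w 0, w 1]) ∈ FB f i :=
      ⟨⟨h₂, ha2, rfl⟩, hkey.2⟩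
    obtain ⟨cA, hcA, huniqA⟩ := huA _ memA
    obtain ⟨cB, hcB, huniqB⟩ := huB _ memB
    have hres : ∀ c : Fin (a + b) → ℂ,
        g - ∑ k, c k • Fin.append bA bB k
          = ((fun w : Fin 3 → ℂ => h₁ ![w 0, w 1]) - ∑ j, c (Fin.castAdd b j) • bA j)
            + ((fun w : Fin 3 → ℂ => w 2 * h₂ ![w 0, w 1])
                - ∑ j, c (Fin.natAdd a j) • bB j) := by
      intro c
      rw [hgeq, hsum c]
      have hsplit : (fun w : Fin 3 → ℂ => h₁ ![w 0, w 1] + w 2 * h₂ ![w 0, w 1])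
          = (fun w : Fin 3 → ℂ => h₁ ![w 0, w 1])
            + (fun w : Fin 3 → ℂ => w 2 * h₂ ![w 0, w 1]) := rfl
      rw [hsplit]; abel
    have eXA : ∀ c : Fin a → ℂ,
        ((fun w : Fin 3 → ℂ => h₁ ![w 0, w 1]) - ∑ j, c j • bA j)
          = fun w : Fin 3 → ℂ => (h₁ - ∑ j, c j • gA j) ![w 0, w 1] := by
      intro c; funext w
      simp only [Pi.sub_apply, Finset.sum_apply, Pi.smul_apply, smul_eq_mul]
      congr 1
      exact Finset.sum_congr rfl fun j _ => by rw [hgAeq j]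
    have eXB : ∀ c : Fin b → ℂ,
        ((fun w : Fin 3 → ℂ => w 2 * h₂ ![w 0, w 1]) - ∑ j, c j • bB j)
          = fun w : Fin 3 → ℂ => w 2 * ((h₂ - ∑ j, c j • gB j) ![w 0, w 1]) := by
      intro c; funext w
      simp only [Pi.sub_apply, Finset.sum_apply, Pi.smul_apply, smul_eq_mul, mul_sub,
        Finset.mul_sum]
      congr 1
      exact Finset.sum_congr rfl fun j _ => by rw [hgBeq j]; ring
    refine ⟨Fin.append cA cB, ?_, ?_⟩
    · show g - ∑ k, Fin.append cA cB k • Fin.append bA bB k ∈ FS f (i + 1)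
      rw [hres]
      simp only [Fin.append_left, Fin.append_right]
      obtain ⟨⟨p, hp, hpe⟩, hvA⟩ := hcA
      obtain ⟨⟨q, hq, hqe⟩, hvB⟩ := hcB
      rw [hpe] at hvA
      rw [hqe] at hvB
      refine ⟨⟨p, q, hp, hq, by rw [hpe, hqe]; rfl⟩, ?_⟩
      rw [hpe, hqe]
      exact (key_iff f (i + 1) p q hp hq).mpr ⟨hvA, hvB⟩
    · intro c' hc'
      rw [hres c'] at hc'
      obtain ⟨⟨p, q, hp, hq, heq⟩, hv⟩ := hc'
      rw [heq] at hv
      rw [eXA, eXB] at heq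
      obtain ⟨hps, hqs⟩ := dec_inj heq
      have hkey' := (key_iff f (i + 1) p q hp hq).mp hv
      have memA' : ((fun w : Fin 3 → ℂ => h₁ ![w 0, w 1])
          - ∑ j, c' (Fin.castAdd b j) • bA j) ∈ FA f (i + 1) := by
        rw [eXA, hps]
        exact ⟨⟨p, hp, rfl⟩, hkey'.1⟩
      have memB' : ((fun w : Fin 3 → ℂ => w 2 * h₂ ![w 0, w 1])
          - ∑ j, c' (Fin.natAdd a j) • bB j) ∈ FB f (i + 1) := by
        rw [eXB, hqs]
        exact ⟨⟨q, hq, rfl⟩, hkey'.2⟩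
      have hA' := huniqA (fun j => c' (Fin.castAdd b j)) memA'
      have hB' := huniqB (fun j => c' (Fin.natAdd a j)) memB'
      funext k
      refine Fin.addCases (fun j => ?_) (fun j => ?_) k
      · rw [Fin.append_left]; exact congrFun hA' j
      · rw [Fin.append_right]; exact congrFun hB' j
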